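/- Let A and B be disjoint subsets of {1,…,p} with |A ∪ B| ≤ 6s*. Enumerate B = {k_1,…,k_m} and set A_ℓ = A ∪ {k_1,…,k_ℓ} for ℓ = 0,…,m (so A_0 = A). Then for every w ∈ ℝ^n, ‖Φ_{A∪B} w‖² − ‖Φ_A w‖² ≤ Σ_{ℓ=0}^{m−1} ⟨(I − Φ_{A_ℓ}) X_{k_{ℓ+1}}, w⟩² / (nν). -/

import Mathlib

open scoped RealInnerProductSpace


open scoped BigOperators
open Finset

noncomputable section

/-- Span of the columns `X j`, `j ∈ S`. -/
def colSpan {n p : ℕ} (X : Fin p → EuclideanSpace ℝ (Fin n)) (S : Finset (Fin p)) :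
    Submodule ℝ (EuclideanSpace ℝ (Fin n)) :=
  Submodule.span ℝ (X '' ↑S)

/-- `Φ_S`, the orthogonal projection of ℝ^n onto the span of the columns in `S`. -/
noncomputable def proj {n p : ℕ} (X : Fin p → EuclideanSpace ℝ (Fin n)) (S : Finset (Fin p)) :
    EuclideanSpace ℝ (Fin n) →ₗ[ℝ] EuclideanSpace ℝ (Fin n) :=
  (colSpan X S).subtype ∘ₗ ((colSpan X S).orthogonalProjectionOnto).toLinearMap

/-- Restricted eigenvalue condition: `‖X_S w‖² ≥ n ν ‖w‖²` for all `S` with `|S| ≤ m`. -/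
def RECond {n p : ℕ} (X : Fin p → EuclideanSpace ℝ (Fin n)) (ν : ℝ) (m : ℕ) : Prop :=
  ∀ S : Finset (Fin p), S.card ≤ m → ∀ w : Fin p → ℝ,
    (n : ℝ) * ν * ∑ j ∈ S, w j ^ 2 ≤ ‖∑ j ∈ S, w j • X j‖ ^ 2

end

/-- telescoping bound. B is enumerated by a duplicate-free list l = (k_1, …, k_m),
A_ℓ = A ∪ {k_1,…,k_ℓ}, and ‖Φ_{A∪B} w‖² − ‖Φ_A w‖² ≤ Σ_ℓ ⟨(I − Φ_{A_ℓ})X_{k_{ℓ+1}}, w⟩²/(nν). -/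

lemma mem_colSpan {n p : ℕ} (X : Fin p → EuclideanSpace ℝ (Fin n)) (S : Finset (Fin p))
    {x : EuclideanSpace ℝ (Fin n)} (hx : x ∈ colSpan X S) :
    ∃ c : Fin p → ℝ, x = ∑ j ∈ S, c j • X j := by
  rw [colSpan, Finsupp.mem_span_image_iff_linearCombination] at hx
  obtain ⟨c, hsupp, hc⟩ := hx
  refine ⟨c, ?_⟩
  rw [← hc, Finsupp.linearCombination_apply, Finsupp.sum]
  refine Finset.sum_subset ((Finsupp.mem_supported ℝ c).mp hsupp) ?_
  intro j _ hj
  simp [Finsupp.notMem_support_iff.mp hj]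

lemma proj_mem {n p : ℕ} (X : Fin p → EuclideanSpace ℝ (Fin n)) (S : Finset (Fin p))
    (x : EuclideanSpace ℝ (Fin n)) : proj X S x ∈ colSpan X S :=
  ((colSpan X S).orthogonalProjectionOnto x).2

lemma resid_lb {n p s : ℕ} {X : Fin p → EuclideanSpace ℝ (Fin n)} {ν : ℝ} (hν : 0 < ν)
    (hRE : RECond X ν (6 * s)) {S : Finset (Fin p)} {k : Fin p} (hk : k ∉ S)
    (hcard : (insert k S).card ≤ 6 * s) :
    (n : ℝ) * ν ≤ ‖X k - proj X S (X k)‖ ^ 2 := by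
  obtain ⟨c, hc⟩ := mem_colSpan X S (proj_mem X S (X k))
  set u : Fin p → ℝ := fun j => if j = k then 1 else -c j with hu
  have hsum : ∑ j ∈ insert k S, u j • X j = X k - proj X S (X k) := by
    rw [Finset.sum_insert hk, hc]
    simp only [hu, if_pos rfl, one_smul]
    rw [sub_eq_add_neg, ← Finset.sum_neg_distrib]
    congr 1
    refine Finset.sum_congr rfl fun j hj => ?_
    have : j ≠ k := fun h => hk (h ▸ hj)
    simp [this, neg_smul]
  have hsq : (1 : ℝ) ≤ ∑ j ∈ insert k S, u j ^ 2 := by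
    rw [Finset.sum_insert hk]
    simp only [hu, if_pos rfl, one_pow]
    have : (0:ℝ) ≤ ∑ j ∈ S, u j ^ 2 := Finset.sum_nonneg fun j _ => sq_nonneg _
    linarith
  have := hRE (insert k S) hcard u
  rw [hsum] at this
  calc (n : ℝ) * ν = (n : ℝ) * ν * 1 := by ring
    _ ≤ (n : ℝ) * ν * ∑ j ∈ insert k S, u j ^ 2 := by
        apply mul_le_mul_of_nonneg_left hsq (by positivity)
    _ ≤ _ := this

lemma colSpan_mono {n p : ℕ} (X : Fin p → EuclideanSpace ℝ (Fin n)) {S T : Finset (Fin p)}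
    (h : S ⊆ T) : colSpan X S ≤ colSpan X T :=
  Submodule.span_mono (Set.image_mono h)

lemma step_lemma {n p s : ℕ} (hn : 0 < n) {X : Fin p → EuclideanSpace ℝ (Fin n)} {ν : ℝ}
    (hν : 0 < ν) (hRE : RECond X ν (6 * s)) {S : Finset (Fin p)} {k : Fin p} (hk : k ∉ S)
    (hcard : (insert k S).card ≤ 6 * s) (w : EuclideanSpace ℝ (Fin n)) :
    ‖proj X (insert k S) w‖ ^ 2 - ‖proj X S w‖ ^ 2 ≤
      (inner ℝ (X k - proj X S (X k)) w : ℝ) ^ 2 / ((n : ℝ) * ν) := by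
  have hnν : (0:ℝ) < (n : ℝ) * ν := by positivity
  set K := colSpan X S with hK
  set v' : EuclideanSpace ℝ (Fin n) := X k - proj X S (X k) with hv'
  have hres : (n : ℝ) * ν ≤ ‖v'‖ ^ 2 := resid_lb hν hRE hk hcard
  have hv'ne : v' ≠ 0 := by
    intro h; rw [h] at hres; simp at hres; nlinarith
  have hv'o : v' ∈ Kᗮ := Submodule.sub_starProjection_mem_orthogonal (K := K) (X k)
  set c : ℝ := (inner ℝ v' w : ℝ) / ‖v'‖ ^ 2 with hc
  have hKle : K ≤ colSpan X (insert k S) := colSpan_mono X (Finset.subset_insert k S)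
  -- the projection onto the bigger space
  have hproj : proj X (insert k S) w = proj X S w + c • v' := by
    have := Submodule.eq_starProjection_of_mem_of_inner_eq_zero
      (K := colSpan X (insert k S)) (u := w) (v := proj X S w + c • v') ?_ ?_
    · exact this
    · apply Submodule.add_mem
      · exact hKle (proj_mem X S w)
      · apply Submodule.smul_mem
        apply Submodule.sub_mem
        · exact Submodule.subset_span ⟨k, by simp, rfl⟩
        · exact hKle (proj_mem X S (X k))
    · intro y hy
      have hgen : ∀ z ∈ K, (inner ℝ (w - (proj X S w + c • v')) z : ℝ) = 0 := by
        intro z hz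
        have h1 : (inner ℝ (w - proj X S w) z : ℝ) = 0 :=
          Submodule.starProjection_inner_eq_zero (K := K) w z hz
        have h2 : (inner ℝ v' z : ℝ) = 0 := by rw [real_inner_comm]; exact hv'o z hz
        have : w - (proj X S w + c • v') = (w - proj X S w) - c • v' := by abel
        rw [this, inner_sub_left, inner_smul_left, h1, h2]
        simp
      have hXk : (inner ℝ (w - (proj X S w + c • v')) (X k) : ℝ) = 0 := by
        have hsplit : X k = v' + proj X S (X k) := by simp [hv']
        rw [hsplit, inner_add_right, hgen _ (proj_mem X S (X k)), add_zero]
        have : w - (proj X S w + c • v') = (w - proj X S w) - c • v' := by abel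
        rw [this, inner_sub_left, inner_smul_left]
        have h1 : (inner ℝ (w - proj X S w) v' : ℝ) = (inner ℝ v' w : ℝ) := by
          rw [inner_sub_left, hv'o _ (proj_mem X S w), sub_zero, real_inner_comm]
        have h2 : (inner ℝ v' v' : ℝ) = ‖v'‖ ^ 2 := real_inner_self_eq_norm_sq v'
        have hz : (‖v'‖:ℝ) ^ 2 ≠ 0 := pow_ne_zero 2 (norm_ne_zero_iff.mpr hv'ne)
        rw [h1, h2, hc]
        simp only [starRingEnd_apply, star_trivial]
        rw [div_mul_cancel₀ _ hz, sub_self]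
      -- extend to the span
      have : colSpan X (insert k S) ≤
          LinearMap.ker (innerSL ℝ (w - (proj X S w + c • v'))).toLinearMap := by
        rw [colSpan]
        apply Submodule.span_le.mpr
        rintro z ⟨j, hj, rfl⟩
        simp only [SetLike.mem_coe, LinearMap.mem_ker]
        rcases Finset.mem_insert.mp (by exact_mod_cast hj) with h | h
        · subst h; exact hXk
        · exact hgen _ (Submodule.subset_span ⟨j, h, rfl⟩)
      exact this hy
  rw [hproj]
  have horth : (inner ℝ ((proj X S w : EuclideanSpace ℝ (Fin n))) (c • v') : ℝ) = 0 := by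
    rw [inner_smul_right, hv'o _ (proj_mem X S w), mul_zero]
  rw [norm_add_sq_real, horth]
  have hnormsmul : ‖c • v'‖ ^ 2 = (inner ℝ v' w : ℝ) ^ 2 / ‖v'‖ ^ 2 := by
    rw [norm_smul, mul_pow, hc]
    rw [Real.norm_eq_abs, sq_abs]
    have : ‖v'‖ ≠ 0 := norm_ne_zero_iff.mpr hv'ne
    field_simp
  have hfin : (inner ℝ v' w : ℝ) ^ 2 / ‖v'‖ ^ 2 ≤ (inner ℝ v' w : ℝ) ^ 2 / ((n:ℝ) * ν) :=
    div_le_div_of_nonneg_left (sq_nonneg _) hnν hres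
  rw [hnormsmul]
  linarith

lemma telescope {n p s : ℕ} (hn : 0 < n) {X : Fin p → EuclideanSpace ℝ (Fin n)} {ν : ℝ}
    (hν : 0 < ν) (hRE : RECond X ν (6 * s)) :
    ∀ (l : List (Fin p)) (A : Finset (Fin p)), l.Nodup → Disjoint A l.toFinset →
      (A ∪ l.toFinset).card ≤ 6 * s → ∀ w : EuclideanSpace ℝ (Fin n),
    ‖proj X (A ∪ l.toFinset) w‖ ^ 2 - ‖proj X A w‖ ^ 2 ≤
      ∑ ℓ : Fin l.length,
        (inner ℝ (X (l.get ℓ) - proj X (A ∪ (l.take ℓ).toFinset) (X (l.get ℓ))) w : ℝ) ^ 2 /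
          ((n : ℝ) * ν) := by
  intro l
  induction l with
  | nil => intro A _ _ _ w; simp
  | cons k l ih =>
    intro A hnd hdisj hcard w
    have hndl : l.Nodup := (List.nodup_cons.mp hnd).2
    have hknl : k ∉ l.toFinset := by
      simp [List.mem_toFinset]; exact (List.nodup_cons.mp hnd).1
    have hkA : k ∉ A := fun h => by
      have := Finset.disjoint_left.mp hdisj h
      simp at this
    have hunion : A ∪ (k :: l).toFinset = insert k A ∪ l.toFinset := by
      simp [List.toFinset_cons, Finset.union_insert, Finset.insert_union]
    have hdisj' : Disjoint (insert k A) l.toFinset := by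
      rw [Finset.disjoint_left]
      intro a ha hal
      rcases Finset.mem_insert.mp ha with h | h
      · exact hknl (h ▸ hal)
      · exact Finset.disjoint_left.mp hdisj h (by simp [List.mem_toFinset] at hal ⊢; exact Or.inr hal)
    have hcard' : (insert k A ∪ l.toFinset).card ≤ 6 * s := by
      rw [← hunion]; exact hcard
    have hcardstep : (insert k A).card ≤ 6 * s := by
      refine le_trans (Finset.card_le_card ?_) hcard
      intro a ha
      rcases Finset.mem_insert.mp ha with h | h
      · subst h; exact Finset.mem_union_right _ (by simp)
      · exact Finset.mem_union_left _ h
    have hstep := step_lemma hn hν hRE hkA hcardstep w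
    have hih := ih (insert k A) hndl hdisj' hcard' w
    rw [hunion]
    simp only [List.length_cons, Fin.sum_univ_succ, Fin.val_zero, List.take_zero,
      List.toFinset_nil, Finset.union_empty, List.get_cons_zero, Fin.val_succ,
      List.take_succ_cons, List.toFinset_cons, Finset.union_insert,
      show ∀ x : Fin l.length, (k :: l).get x.succ = l.get x from fun _ => rfl,
      Finset.insert_union]
    simp only [Finset.insert_union] at hih
    linarith [hstep, hih]

theorem stmt3 {n p s : ℕ} (hn : 0 < n) (hp : 0 < p) (hs : 0 < s)
    (X : Fin p → EuclideanSpace ℝ (Fin n))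
    (hX : ∀ j, ‖X j‖ = Real.sqrt n)
    {ν : ℝ} (hν : 0 < ν) (hRE : RECond X ν (6 * s))
    (A B : Finset (Fin p)) (hdisj : Disjoint A B) (hcard : (A ∪ B).card ≤ 6 * s)
    (l : List (Fin p)) (hnd : l.Nodup) (hlB : l.toFinset = B)
    (w : EuclideanSpace ℝ (Fin n)) :
    ‖proj X (A ∪ B) w‖ ^ 2 - ‖proj X A w‖ ^ 2 ≤
      ∑ ℓ : Fin l.length,
        (inner ℝ (X (l.get ℓ) - proj X (A ∪ (l.take ℓ).toFinset) (X (l.get ℓ))) w : ℝ) ^ 2 /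
          ((n : ℝ) * ν) := by
  subst hlB
  exact telescope hn hν hRE l A hnd hdisj hcard w
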